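/- Let X be a set, let F be the free group on X, and let A be an abelian group equipped with an action of F by group automorphisms. Then every function f : X → A extends in a unique way to a derivation δ : F → A, i.e., there is a unique map δ : F → A satisfying δ(gh) = (h⁻¹ • δ(g)) · δ(h) for all g, h ∈ F and δ(x) = f(x) for every generator x ∈ X. -/

import Mathlib

theorem freeGroup_derivation_extension_unique
    {X : Type*} {A : Type*} [CommGroup A] [MulDistribMulAction (FreeGroup X) A]
    (f : X → A) :
    ∃! δ : FreeGroup X → A,
      (∀ g h : FreeGroup X, δ (g * h) = (h⁻¹ • δ g) * δ h) ∧
      (∀ x : X, δ (FreeGroup.of x) = f x) := by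
  classical
  set φ : FreeGroup X →* MulAut A := MulDistribMulAction.toMulAut (FreeGroup X) A with hφ
  let Φ : FreeGroup X →* SemidirectProduct A (FreeGroup X) φ :=
    FreeGroup.lift (fun x => ⟨FreeGroup.of x • f x, FreeGroup.of x⟩)
  have hright : ∀ g : FreeGroup X, (Φ g).right = g := by
    have : SemidirectProduct.rightHom.comp Φ = MonoidHom.id (FreeGroup X) := by
      apply FreeGroup.ext_hom
      intro x
      simp [Φ]
    intro g
    exact DFunLike.congr_fun this g
  set δ : FreeGroup X → A := fun g => g⁻¹ • (Φ g).left with hδ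
  have hcoc : ∀ g h : FreeGroup X, δ (g * h) = (h⁻¹ • δ g) * δ h := by
    intro g h
    have hmul : (Φ (g * h)).left = (Φ g).left * g • (Φ h).left := by
      rw [map_mul, SemidirectProduct.mul_left, hright]
      rfl
    show (g * h)⁻¹ • (Φ (g * h)).left = h⁻¹ • (g⁻¹ • (Φ g).left) * h⁻¹ • (Φ h).left
    rw [hmul, mul_inv_rev, smul_mul', mul_smul, mul_smul, inv_smul_smul]
  have hgen : ∀ x : X, δ (FreeGroup.of x) = f x := by
    intro x
    simp only [hδ, Φ, FreeGroup.lift_apply_of]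
    exact inv_smul_smul _ _
  refine ⟨δ, ⟨hcoc, hgen⟩, ?_⟩
  rintro ε ⟨hεcoc, hεgen⟩
  -- uniqueness: any derivation is determined by its values on generators
  have key : ∀ (d : FreeGroup X → A),
      (∀ g h : FreeGroup X, d (g * h) = (h⁻¹ • d g) * d h) →
      (∀ x : X, d (FreeGroup.of x) = f x) → ∀ g, d g = δ g := by
    intro d hd hdf
    have hone : d 1 = 1 := by
      have := hd 1 1
      simpa using this
    have hδone : δ 1 = 1 := by
      have := hcoc 1 1
      simpa using this
    have hinv : ∀ (e : FreeGroup X → A), (∀ g h, e (g * h) = (h⁻¹ • e g) * e h) →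
        e 1 = 1 → ∀ g, e g⁻¹ = (g • e g)⁻¹ := by
      intro e he he1 g
      have := he g g⁻¹
      rw [mul_inv_cancel, he1, inv_inv] at this
      exact eq_inv_of_mul_eq_one_right this.symm
    intro g
    induction g using FreeGroup.induction_on with
    | C1 => rw [hone, hδone]
    | of x => exact (hdf x).trans (hgen x).symm
    | inv_of x ih => rw [hinv d hd hone, hinv δ hcoc hδone, ih]
    | mul g h ihg ihh => rw [hd, hcoc, ihg, ihh]
  exact funext (key ε hεcoc hεgen)
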